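/- Let α, β > 0 with α + β = 1. There exists a constant C > 0, depending only on α, such that for every complex sequence b = {b(i)}_{i∈ℤ} and every j₀ ∈ ℤ with j₀ ≠ 0: ∑_{i ∈ ℤ, 0 < |i − j₀| ≤ |j₀|} |b(i)| / (|i − j₀|^α |i + j₀|^β) ≤ C (Mb)(j₀). -/

import Mathlib

open scoped ENNReal NNReal BigOperators

/-- The centered discrete maximal operator:
`(Mb)(j) = sup_{N ∈ ℕ₀} (2N+1)⁻¹ ∑_{|i-j| ≤ N} |b(i)|`, with values in `[0,∞]`. -/
noncomputable def maxOp (b : ℤ → ℂ) (j : ℤ) : ℝ≥0∞ :=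
  ⨆ N : ℕ, (∑ i ∈ Finset.Icc (j - N) (j + N), (‖b i‖₊ : ℝ≥0∞)) / (2 * (N : ℝ≥0∞) + 1)

private lemma lemA (α : ℝ) (hα : 0 < α) (hα1 : α ≤ 1) (x : ℝ) (hx : 1 ≤ x) :
    x ^ (-α) ≤ (x + 1) ^ (-α) + α * x ^ (-1 - α) := by
  have hx0 : 0 < x := lt_of_lt_of_le one_pos hx
  have hx10 : 0 < x + 1 := by linarith
  have hA : 0 < x ^ α := Real.rpow_pos_of_pos hx0 _
  have hBpos : 0 < (x+1)^α := Real.rpow_pos_of_pos hx10 _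
  have hAB : x ^ α ≤ (x+1) ^ α := Real.rpow_le_rpow hx0.le (by linarith) hα.le
  have key : (x + 1) ^ α ≤ x ^ α * (1 + α / x) := by
    have amgm := Real.geom_mean_le_arith_mean2_weighted hα.le (by linarith : (0:ℝ) ≤ 1 - α)
      (by positivity : (0:ℝ) ≤ (x+1)/x) zero_le_one (by ring)
    simp only [Real.one_rpow, mul_one] at amgm
    rw [Real.div_rpow (by linarith) hx0.le, div_le_iff₀ hA] at amgm
    calc (x+1)^α ≤ (α * ((x+1)/x) + (1-α)) * x ^ α := amgm
      _ = x ^ α * (1 + α / x) := by field_simp; ring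
  have e1 : x ^ (-α) = 1 / x ^ α := by rw [Real.rpow_neg hx0.le]; ring
  have e2 : (x+1) ^ (-α) = 1 / (x + 1) ^ α := by rw [Real.rpow_neg hx10.le]; ring
  have e3 : x ^ (-1 - α) = 1 / (x * x ^ α) := by
    rw [show (-1 - α) = (-1) + (-α) by ring, Real.rpow_add hx0, Real.rpow_neg hx0.le,
      Real.rpow_neg hx0.le, Real.rpow_one]
    ring
  rw [e1, e2, e3]
  have step : 1 / x ^ α - 1 / (x+1)^α ≤ α * (1 / (x * x ^ α)) := by
    rw [div_sub_div _ _ (ne_of_gt hA) (ne_of_gt hBpos), mul_one_div,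
      div_le_div_iff₀ (by positivity) (by positivity)]
    have h1 : ((x+1)^α - x^α) * x ≤ α * x ^ α := by
      have expand : x ^ α * (1 + α / x) = x ^ α + α * x ^ α / x := by field_simp
      have : (x+1)^α - x^α ≤ α * x^α / x := by rw [expand] at key; linarith
      calc ((x+1)^α - x^α) * x ≤ (α * x^α / x) * x := by nlinarith
        _ = α * x ^ α := by field_simp
    calc (1 * (x+1)^α - x^α * 1) * (x * x ^ α) = (((x+1)^α - x^α) * x) * x ^ α := by ring
      _ ≤ (α * x ^ α) * x ^ α := by nlinarith
      _ ≤ α * (x ^ α * (x+1)^α) := by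
          nlinarith [mul_le_mul_of_nonneg_left hAB (by positivity : (0:ℝ) ≤ α * x ^ α)]
  linarith

private lemma lemBstep (β : ℝ) (hβ : 0 < β) (hβ1 : β ≤ 1) (x : ℝ) (hx : 1 ≤ x) :
    β * (x + 1) ^ (β - 1) ≤ (x + 1) ^ β - x ^ β := by
  have hx0 : 0 < x := lt_of_lt_of_le one_pos hx
  have hx10 : 0 < x + 1 := by linarith
  have amgm := Real.geom_mean_le_arith_mean2_weighted hβ.le (by linarith : (0:ℝ) ≤ 1 - β)
    (by positivity : (0:ℝ) ≤ x/(x+1)) zero_le_one (by ring)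
  simp only [Real.one_rpow, mul_one] at amgm
  rw [Real.div_rpow hx0.le hx10.le] at amgm
  have hB : 0 < (x+1)^β := Real.rpow_pos_of_pos hx10 _
  rw [div_le_iff₀ hB] at amgm
  have e : (x+1)^(β-1) = (x+1)^β / (x+1) := by
    rw [Real.rpow_sub hx10, Real.rpow_one]
  rw [e]
  have h2 : (β * (x / (x + 1)) + (1 - β)) * (x+1)^β = (x+1)^β - β * ((x+1)^β / (x+1)) := by
    field_simp
    ring
  rw [h2] at amgm
  linarith

private lemma lemB (α β : ℝ) (hα : 0 < α) (hβ : 0 < β) (hαβ : α + β = 1) (J : ℕ) (hJ : 1 ≤ J) :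
    ∑ N ∈ Finset.Icc 1 J, ((N : ℝ)) ^ (-α) ≤ (J : ℝ) ^ β / β := by
  induction J, hJ using Nat.le_induction with
  | base =>
    simp only [Finset.Icc_self, Finset.sum_singleton, Nat.cast_one, Real.one_rpow]
    rw [le_div_iff₀ hβ]; nlinarith [Real.one_rpow β]
  | succ J hJ ih =>
    rw [Finset.sum_Icc_succ_top (by omega : 1 ≤ J + 1)]
    have hx : (1:ℝ) ≤ (J:ℝ) := by exact_mod_cast hJ
    have step := lemBstep β hβ (by linarith) (J:ℝ) hx
    have e1 : ((J:ℝ) + 1) ^ (β - 1) = ((J:ℝ)+1) ^ (-α) := by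
      congr 1; linarith
    push_cast
    have h4 : ((J:ℝ)+1)^(-α) ≤ (((J:ℝ)+1)^β - (J:ℝ)^β)/β := by
      rw [le_div_iff₀ hβ, ← e1]; nlinarith [step]
    have h5 : (J:ℝ)^β/β + (((J:ℝ)+1)^β - (J:ℝ)^β)/β = ((J:ℝ)+1)^β/β := by
      rw [← add_div]; ring_nf
    linarith [ih, h4]

private lemma lemC (α : ℝ) (hα : 0 < α) (hα1 : α ≤ 1) (d J : ℕ) (hd : 1 ≤ d) (hdJ : d ≤ J) :
    (d : ℝ) ^ (-α) ≤ ((J : ℝ) + 1) ^ (-α) + ∑ N ∈ Finset.Icc d J, α * (N : ℝ) ^ (-1 - α) := by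
  induction J, hdJ using Nat.le_induction with
  | base =>
    rw [Finset.Icc_self, Finset.sum_singleton]
    have := lemA α hα hα1 (d:ℝ) (by exact_mod_cast hd)
    linarith
  | succ J hJ ih =>
    rw [Finset.sum_Icc_succ_top (by omega : d ≤ J + 1)]
    have hx : (1:ℝ) ≤ (J:ℝ) + 1 := by
      have : (1:ℝ) ≤ (J:ℝ) := by exact_mod_cast le_trans hd hJ
      linarith
    have step := lemA α hα hα1 ((J:ℝ)+1) hx
    push_cast
    push_cast at ih
    linarith

private lemma lemD (b : ℤ → ℂ) (j₀ : ℤ) (N : ℕ) :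
    ∑ i ∈ Finset.Icc (j₀ - N) (j₀ + N), (‖b i‖₊ : ℝ≥0∞) ≤ (2 * (N : ℝ≥0∞) + 1) * maxOp b j₀ := by
  have h := le_iSup (fun N : ℕ =>
    (∑ i ∈ Finset.Icc (j₀ - N) (j₀ + N), (‖b i‖₊ : ℝ≥0∞)) / (2 * (N : ℝ≥0∞) + 1)) N
  rw [ENNReal.div_le_iff (by simp) (by finiteness)] at h
  rw [mul_comm]
  exact h

private lemma hcast2 (N : ℕ) : (2 * (N : ℝ≥0∞) + 1) = ENNReal.ofReal (2 * (N : ℝ) + 1) := by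
  rw [show (2 * (N:ℝ) + 1) = ((2 * N + 1 : ℕ) : ℝ) by push_cast; ring, ENNReal.ofReal_natCast]
  push_cast; ring

private lemma mul_rpow_aux (x : ℝ) (hx : 0 < x) (t : ℝ) : x * x ^ t = x ^ (1 + t) := by
  rw [Real.rpow_add hx, Real.rpow_one]

private lemma lemE (α β : ℝ) (hα : 0 < α) (hβ : 0 < β) (hαβ : α + β = 1)
    (J : ℕ) (hJ : 1 ≤ J) :
    ((2 * (J:ℝ) + 1) * (((J:ℝ)+1) ^ (-α))
      + ∑ N ∈ Finset.Icc 1 J, (2 * (N:ℝ) + 1) * (α * (N:ℝ) ^ (-1 - α))) * (J:ℝ) ^ (-β)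
      ≤ 3 + 3 / β := by
  have hJ1 : (1:ℝ) ≤ (J:ℝ) := by exact_mod_cast hJ
  have hJ0 : (0:ℝ) < (J:ℝ) := by linarith
  have hα1 : α ≤ 1 := by linarith
  have t1 : (2 * (J:ℝ) + 1) * (((J:ℝ)+1) ^ (-α)) ≤ 3 * (J:ℝ) ^ β := by
    have h1 : ((J:ℝ)+1) ^ (-α) ≤ (J:ℝ) ^ (-α) :=
      Real.rpow_le_rpow_of_nonpos hJ0 (by linarith) (by linarith)
    have h2 : (2 * (J:ℝ) + 1) ≤ 3 * (J:ℝ) := by linarith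
    calc (2 * (J:ℝ) + 1) * (((J:ℝ)+1) ^ (-α)) ≤ (3 * (J:ℝ)) * ((J:ℝ) ^ (-α)) := by
          apply mul_le_mul h2 h1 (Real.rpow_nonneg (by linarith) _) (by linarith)
      _ = 3 * ((J:ℝ) * (J:ℝ) ^ (-α)) := by ring
      _ = 3 * (J:ℝ) ^ β := by rw [mul_rpow_aux _ hJ0, show (1:ℝ) + -α = β by linarith]
  have t2 : ∀ N ∈ Finset.Icc 1 J, (2 * (N:ℝ) + 1) * (α * (N:ℝ) ^ (-1 - α))
      ≤ 3 * α * (N:ℝ) ^ (-α) := by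
    intro N hN
    rw [Finset.mem_Icc] at hN
    have hN1 : (1:ℝ) ≤ (N:ℝ) := by exact_mod_cast hN.1
    have hN0 : (0:ℝ) < (N:ℝ) := by linarith
    have h2 : (2 * (N:ℝ) + 1) ≤ 3 * (N:ℝ) := by linarith
    have h3 : (0:ℝ) ≤ α * (N:ℝ) ^ (-1 - α) := by positivity
    calc (2 * (N:ℝ) + 1) * (α * (N:ℝ) ^ (-1 - α)) ≤ (3 * (N:ℝ)) * (α * (N:ℝ) ^ (-1 - α)) :=
          mul_le_mul_of_nonneg_right h2 h3
      _ = 3 * α * ((N:ℝ) * (N:ℝ) ^ (-1 - α)) := by ring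
      _ = 3 * α * (N:ℝ) ^ (-α) := by rw [mul_rpow_aux _ hN0, show (1:ℝ) + (-1 - α) = -α by ring]
  have t3 : ∑ N ∈ Finset.Icc 1 J, (2 * (N:ℝ) + 1) * (α * (N:ℝ) ^ (-1 - α))
      ≤ 3 * ((J:ℝ) ^ β / β) := by
    calc ∑ N ∈ Finset.Icc 1 J, (2 * (N:ℝ) + 1) * (α * (N:ℝ) ^ (-1 - α))
        ≤ ∑ N ∈ Finset.Icc 1 J, 3 * α * (N:ℝ) ^ (-α) := Finset.sum_le_sum t2
      _ = 3 * α * ∑ N ∈ Finset.Icc 1 J, (N:ℝ) ^ (-α) := by rw [Finset.mul_sum]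
      _ ≤ 3 * α * ((J:ℝ) ^ β / β) := by
          apply mul_le_mul_of_nonneg_left (lemB α β hα hβ hαβ J hJ) (by positivity)
      _ ≤ 3 * ((J:ℝ) ^ β / β) := by
          have : (0:ℝ) ≤ (J:ℝ) ^ β / β := by positivity
          nlinarith
  have hcancel : (J:ℝ) ^ β * (J:ℝ) ^ (-β) = 1 := by
    rw [← Real.rpow_add hJ0, add_neg_cancel, Real.rpow_zero]
  have hpow : (0:ℝ) ≤ (J:ℝ) ^ (-β) := Real.rpow_nonneg (by linarith) _
  calc ((2 * (J:ℝ) + 1) * (((J:ℝ)+1) ^ (-α))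
        + ∑ N ∈ Finset.Icc 1 J, (2 * (N:ℝ) + 1) * (α * (N:ℝ) ^ (-1 - α))) * (J:ℝ) ^ (-β)
      ≤ (3 * (J:ℝ) ^ β + 3 * ((J:ℝ) ^ β / β)) * (J:ℝ) ^ (-β) := by
        apply mul_le_mul_of_nonneg_right (by linarith) hpow
    _ = (3 + 3 / β) * ((J:ℝ) ^ β * (J:ℝ) ^ (-β)) := by field_simp
    _ = 3 + 3 / β := by rw [hcancel, mul_one]

/-- **Pointwise bound by the maximal function on `I₁ = {i : 0 < |i - j₀| ≤ |j₀|}`.**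
Let `α, β > 0` with `α + β = 1`. There is `C > 0`, depending only on `α`, such that for
every sequence `b : ℤ → ℂ` and every `j₀ ≠ 0`:
`∑_{0 < |i-j₀| ≤ |j₀|} |b(i)|/(|i-j₀|^α |i+j₀|^β) ≤ C (Mb)(j₀)`,
the inequality being understood in `[0,∞]`. -/
theorem stmt18 (α β : ℝ) (hα : 0 < α) (hβ : 0 < β) (hαβ : α + β = 1) :
    ∃ C : ℝ, 0 < C ∧ ∀ (b : ℤ → ℂ) (j₀ : ℤ), j₀ ≠ 0 →
      (∑' i : ℤ, if i ≠ j₀ ∧ |i - j₀| ≤ |j₀| then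
          ENNReal.ofReal (‖b i‖ / (|(i : ℝ) - (j₀ : ℝ)| ^ α * |(i : ℝ) + (j₀ : ℝ)| ^ β))
        else 0) ≤
        ENNReal.ofReal C * maxOp b j₀ := by
  have hα1 : α ≤ 1 := by linarith
  refine ⟨3 + 3 / β, by positivity, ?_⟩
  intro b j₀ hj₀
  set J : ℕ := j₀.natAbs with hJdef
  have hJ1 : 1 ≤ J := Int.natAbs_pos.mpr hj₀
  have hJR1 : (1:ℝ) ≤ (J:ℝ) := by exact_mod_cast hJ1
  have hJR0 : (0:ℝ) < (J:ℝ) := by linarith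
  set M : ℝ≥0∞ := maxOp b j₀ with hM
  set S : Finset ℤ := Finset.Icc (j₀ - J) (j₀ + J) with hS
  set f : ℤ → ℝ≥0∞ := fun i => if i ≠ j₀ ∧ |i - j₀| ≤ |j₀| then
      ENNReal.ofReal (‖b i‖ / (|(i : ℝ) - (j₀ : ℝ)| ^ α * |(i : ℝ) + (j₀ : ℝ)| ^ β))
    else 0 with hf
  -- abs condition in terms of natAbs
  have habs : ∀ i : ℤ, (|i - j₀| ≤ |j₀|) ↔ (i - j₀).natAbs ≤ J := by
    intro i
    rw [Int.abs_eq_natAbs, Int.abs_eq_natAbs]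
    exact_mod_cast Iff.rfl
  -- step 0 : tsum over finite support
  have hsum : (∑' i : ℤ, f i) = ∑ i ∈ S, f i := by
    apply tsum_eq_sum
    intro i hi
    rw [hf]
    simp only
    rw [if_neg]
    rintro ⟨-, h2⟩
    apply hi
    rw [habs] at h2
    simp only [hS, Finset.mem_Icc]
    omega
  rw [hsum]
  set d : ℤ → ℕ := fun i => (i - j₀).natAbs with hd
  set K : ℝ≥0∞ := ENNReal.ofReal ((J:ℝ) ^ (-β)) with hK
  -- step 1 : pointwise bound
  have hpt : ∀ i ∈ S, f i ≤ (‖b i‖₊ : ℝ≥0∞) * ENNReal.ofReal ((d i : ℝ) ^ (-α)) * K := by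
    intro i hiS
    by_cases hij : i = j₀
    · have hz : f i = 0 := by simp [hf, hij]
      rw [hz]; exact zero_le
    · have hiS' : (i - j₀).natAbs ≤ J := by
        simp only [hS, Finset.mem_Icc] at hiS; omega
      have hd1 : 1 ≤ d i := by simp only [hd]; omega
      rw [hf]
      simp only
      rw [if_pos ⟨hij, (habs i).mpr hiS'⟩]
      -- real inequality
      have hdr : |(i : ℝ) - (j₀ : ℝ)| = ((d i : ℕ) : ℝ) := by
        rw [show (i:ℝ) - (j₀:ℝ) = ((i - j₀ : ℤ) : ℝ) by push_cast; ring]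
        rw [← Int.cast_abs, Int.abs_eq_natAbs]
        norm_cast
      have hplus : (J : ℝ) ≤ |(i : ℝ) + (j₀ : ℝ)| := by
        have hZ : (J : ℤ) ≤ |i + j₀| := by
          rw [Int.abs_eq_natAbs]
          have : J ≤ (i + j₀).natAbs := by omega
          exact_mod_cast this
        rw [show (i:ℝ) + (j₀:ℝ) = ((i + j₀ : ℤ) : ℝ) by push_cast; ring, ← Int.cast_abs]
        exact_mod_cast hZ
      have hd0 : (0:ℝ) < ((d i : ℕ) : ℝ) := by exact_mod_cast hd1
      have hreal : ‖b i‖ / (|(i : ℝ) - (j₀ : ℝ)| ^ α * |(i : ℝ) + (j₀ : ℝ)| ^ β)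
          ≤ ‖b i‖ * (((d i : ℕ) : ℝ) ^ (-α) * (J:ℝ) ^ (-β)) := by
        rw [hdr]
        have hden1 : (0:ℝ) < ((d i : ℕ) : ℝ) ^ α := Real.rpow_pos_of_pos hd0 _
        have hden2 : (J:ℝ) ^ β ≤ |(i : ℝ) + (j₀ : ℝ)| ^ β :=
          Real.rpow_le_rpow (by linarith) hplus hβ.le
        have hden2' : (0:ℝ) < (J:ℝ) ^ β := Real.rpow_pos_of_pos hJR0 _
        have h1 : ‖b i‖ / (((d i : ℕ) : ℝ) ^ α * |(i : ℝ) + (j₀ : ℝ)| ^ β)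
            ≤ ‖b i‖ / (((d i : ℕ) : ℝ) ^ α * (J:ℝ) ^ β) := by
          apply div_le_div_of_nonneg_left (norm_nonneg _) (by positivity)
          exact mul_le_mul_of_nonneg_left hden2 hden1.le
        refine h1.trans (le_of_eq ?_)
        rw [Real.rpow_neg hd0.le, Real.rpow_neg (by linarith)]
        field_simp
      calc ENNReal.ofReal (‖b i‖ / (|(i : ℝ) - (j₀ : ℝ)| ^ α * |(i : ℝ) + (j₀ : ℝ)| ^ β))
          ≤ ENNReal.ofReal (‖b i‖ * (((d i : ℕ) : ℝ) ^ (-α) * (J:ℝ) ^ (-β))) :=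
            ENNReal.ofReal_le_ofReal hreal
        _ = (‖b i‖₊ : ℝ≥0∞) * ENNReal.ofReal ((d i : ℝ) ^ (-α)) * K := by
            rw [ENNReal.ofReal_mul (norm_nonneg _), ENNReal.ofReal_mul
              (Real.rpow_nonneg hd0.le _), ofReal_norm, enorm_eq_nnnorm, hK, mul_assoc]
  -- step 2 : weight decomposition in ℝ≥0∞
  have hwt : ∀ i ∈ S, ENNReal.ofReal ((d i : ℝ) ^ (-α)) ≤
      ENNReal.ofReal (((J:ℝ) + 1) ^ (-α)) +
        ∑ N ∈ Finset.Icc 1 J, (if d i ≤ N then ENNReal.ofReal (α * (N:ℝ) ^ (-1 - α)) else 0) := by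
    intro i hiS
    by_cases hij : i = j₀
    · have : d i = 0 := by simp [hd, hij]
      rw [this]
      simp only [Nat.cast_zero]
      rw [Real.zero_rpow (by intro h; exact hα.ne' (by linarith [neg_eq_zero.mp h]))]
      simp only [ENNReal.ofReal_zero]
      exact zero_le
    · have hd1 : 1 ≤ d i := by simp only [hd]; omega
      have hdJ : d i ≤ J := by simp only [hS, Finset.mem_Icc] at hiS; simp only [hd]; omega
      have hC := lemC α hα hα1 (d i) J hd1 hdJ
      calc ENNReal.ofReal ((d i : ℝ) ^ (-α))
          ≤ ENNReal.ofReal (((J:ℝ) + 1) ^ (-α) + ∑ N ∈ Finset.Icc (d i) J, α * (N : ℝ) ^ (-1 - α)) :=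
            ENNReal.ofReal_le_ofReal hC
        _ ≤ ENNReal.ofReal (((J:ℝ) + 1) ^ (-α)) +
              ENNReal.ofReal (∑ N ∈ Finset.Icc (d i) J, α * (N : ℝ) ^ (-1 - α)) :=
            ENNReal.ofReal_add_le
        _ = ENNReal.ofReal (((J:ℝ) + 1) ^ (-α)) +
              ∑ N ∈ Finset.Icc (d i) J, ENNReal.ofReal (α * (N : ℝ) ^ (-1 - α)) := by
            rw [ENNReal.ofReal_sum_of_nonneg]
            intro N hN
            positivity
        _ ≤ ENNReal.ofReal (((J:ℝ) + 1) ^ (-α)) +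
              ∑ N ∈ Finset.Icc 1 J, (if d i ≤ N then ENNReal.ofReal (α * (N:ℝ) ^ (-1 - α)) else 0) := by
            gcongr
            rw [show (∑ N ∈ Finset.Icc (d i) J, ENNReal.ofReal (α * (N : ℝ) ^ (-1 - α)))
              = ∑ N ∈ Finset.Icc (d i) J,
                  (if d i ≤ N then ENNReal.ofReal (α * (N:ℝ) ^ (-1 - α)) else 0) from
              Finset.sum_congr rfl fun N hN => by
                rw [if_pos (Finset.mem_Icc.mp hN).1]]
            apply Finset.sum_le_sum_of_subset
            apply Finset.Icc_subset_Icc_left hd1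
  -- step 3 : maximal bounds for the partial sums
  have hmax : ∀ N : ℕ, (∑ i ∈ S.filter (fun i => d i ≤ N), (‖b i‖₊ : ℝ≥0∞))
      ≤ (2 * (N : ℝ≥0∞) + 1) * M := by
    intro N
    refine le_trans (Finset.sum_le_sum_of_subset ?_) (lemD b j₀ N)
    intro i hi
    simp only [Finset.mem_filter, hS, Finset.mem_Icc, hd] at hi
    simp only [Finset.mem_Icc]
    omega
  have hmaxS : (∑ i ∈ S, (‖b i‖₊ : ℝ≥0∞)) ≤ (2 * (J : ℝ≥0∞) + 1) * M := lemD b j₀ J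
  -- step 4 : assemble
  calc ∑ i ∈ S, f i
      ≤ ∑ i ∈ S, (‖b i‖₊ : ℝ≥0∞) * ENNReal.ofReal ((d i : ℝ) ^ (-α)) * K :=
        Finset.sum_le_sum hpt
    _ = (∑ i ∈ S, (‖b i‖₊ : ℝ≥0∞) * ENNReal.ofReal ((d i : ℝ) ^ (-α))) * K := by
        rw [Finset.sum_mul]
    _ ≤ (∑ i ∈ S, (‖b i‖₊ : ℝ≥0∞) * (ENNReal.ofReal (((J:ℝ) + 1) ^ (-α)) +
          ∑ N ∈ Finset.Icc 1 J,
            (if d i ≤ N then ENNReal.ofReal (α * (N:ℝ) ^ (-1 - α)) else 0))) * K := by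
        gcongr with i hi
        exact hwt i hi
    _ = ((∑ i ∈ S, (‖b i‖₊ : ℝ≥0∞)) * ENNReal.ofReal (((J:ℝ) + 1) ^ (-α)) +
          ∑ N ∈ Finset.Icc 1 J,
            (∑ i ∈ S.filter (fun i => d i ≤ N), (‖b i‖₊ : ℝ≥0∞)) *
              ENNReal.ofReal (α * (N:ℝ) ^ (-1 - α))) * K := by
        congr 1
        simp only [mul_add]
        rw [Finset.sum_add_distrib, ← Finset.sum_mul]
        congr 1
        have : ∀ i ∈ S, (‖b i‖₊ : ℝ≥0∞) * (∑ N ∈ Finset.Icc 1 J,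
            (if d i ≤ N then ENNReal.ofReal (α * (N:ℝ) ^ (-1 - α)) else 0))
            = ∑ N ∈ Finset.Icc 1 J,
              (if d i ≤ N then (‖b i‖₊ : ℝ≥0∞) * ENNReal.ofReal (α * (N:ℝ) ^ (-1 - α)) else 0) := by
          intro i _
          rw [Finset.mul_sum]
          exact Finset.sum_congr rfl fun N _ => by rw [mul_ite, mul_zero]
        rw [Finset.sum_congr rfl this, Finset.sum_comm]
        refine Finset.sum_congr rfl fun N _ => ?_
        rw [← Finset.sum_filter, Finset.sum_mul]
    _ ≤ ((2 * (J : ℝ≥0∞) + 1) * M * ENNReal.ofReal (((J:ℝ) + 1) ^ (-α)) +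
          ∑ N ∈ Finset.Icc 1 J,
            ((2 * (N : ℝ≥0∞) + 1) * M) * ENNReal.ofReal (α * (N:ℝ) ^ (-1 - α))) * K := by
        gcongr with N hN
        · exact hmax N
    _ = ENNReal.ofReal (((2 * (J:ℝ) + 1) * (((J:ℝ)+1) ^ (-α))
          + ∑ N ∈ Finset.Icc 1 J, (2 * (N:ℝ) + 1) * (α * (N:ℝ) ^ (-1 - α))) * (J:ℝ) ^ (-β)) * M := by
        have e0 : (2 * (J:ℝ≥0∞) + 1) * M * ENNReal.ofReal (((J:ℝ)+1) ^ (-α))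
            = ENNReal.ofReal ((2 * (J:ℝ) + 1) * (((J:ℝ)+1) ^ (-α))) * M := by
          have hnn : (0:ℝ) ≤ 2 * (J:ℝ) + 1 := by positivity
          rw [hcast2, ENNReal.ofReal_mul hnn]; ring
        have eN : ∀ N ∈ Finset.Icc 1 J, ((2 * (N:ℝ≥0∞) + 1) * M) * ENNReal.ofReal (α * (N:ℝ) ^ (-1 - α))
            = ENNReal.ofReal ((2 * (N:ℝ) + 1) * (α * (N:ℝ) ^ (-1 - α))) * M := by
          intro N _
          have hnn : (0:ℝ) ≤ 2 * (N:ℝ) + 1 := by positivity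
          rw [hcast2, ENNReal.ofReal_mul hnn]; ring
        have hRnn : (0:ℝ) ≤ (2 * (J:ℝ) + 1) * (((J:ℝ)+1) ^ (-α))
            + ∑ N ∈ Finset.Icc 1 J, (2 * (N:ℝ) + 1) * (α * (N:ℝ) ^ (-1 - α)) := by
          have := Finset.sum_nonneg (fun N (_ : N ∈ Finset.Icc 1 J) =>
            (by positivity : (0:ℝ) ≤ (2 * (N:ℝ) + 1) * (α * (N:ℝ) ^ (-1 - α))))
          positivity
        rw [e0, Finset.sum_congr rfl eN, ← Finset.sum_mul,
          ← ENNReal.ofReal_sum_of_nonneg (fun N _ => by positivity), ← add_mul,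
          ← ENNReal.ofReal_add (by positivity) (Finset.sum_nonneg (fun N _ => by positivity)),
          hK, mul_right_comm, ← ENNReal.ofReal_mul hRnn]
    _ ≤ ENNReal.ofReal (3 + 3 / β) * M := by
        gcongr
        exact lemE α β hα hβ hαβ J hJ1
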